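/- For every digraph D on n vertices, γ⁺ₘ(D) ≤ (n − Δ⁺(D) + 1)/2. -/

import Mathlib

/-- Closed out-neighborhood `N⁺[S]` of a set `S` in the digraph with arc relation `A`. -/
noncomputable def closedOut {V : Type*} [Fintype V] [DecidableEq V]
    (A : V → V → Prop) (S : Finset V) : Finset V :=
  S ∪ @Finset.filter _ (fun v => ∃ u ∈ S, A u v) (Classical.decPred _) Finset.univ

/-- `S` is a majority out-dominating set: `|N⁺[S]| ≥ n/2`. -/
def IsMODS {V : Type*} [Fintype V] [DecidableEq V]
    (A : V → V → Prop) (S : Finset V) : Prop :=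
  2 * (closedOut A S).card ≥ Fintype.card V

/-- Set majority out-domination number `γ⁺ₘ`. -/
noncomputable def gammaM {V : Type*} [Fintype V] [DecidableEq V]
    (A : V → V → Prop) : ℕ :=
  sInf {k | ∃ S : Finset V, IsMODS A S ∧ S.card = k}

/-- Out-domination number `γ⁺`. -/
noncomputable def gammaPlus {V : Type*} [Fintype V] [DecidableEq V]
    (A : V → V → Prop) : ℕ :=
  sInf {k | ∃ S : Finset V, closedOut A S = Finset.univ ∧ S.card = k}

/-- Out-degree of a vertex. -/
noncomputable def outDeg {V : Type*} [Fintype V] [DecidableEq V]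
    (A : V → V → Prop) (v : V) : ℕ :=
  (@Finset.filter _ (fun w => A v w) (Classical.decPred _) Finset.univ).card

/-- Maximum out-degree `Δ⁺`. -/
noncomputable def DeltaPlus {V : Type*} [Fintype V] [DecidableEq V]
    (A : V → V → Prop) : ℕ :=
  Finset.univ.sup (outDeg A)

lemma mem_closedOut_iff {V : Type*} [Fintype V] [DecidableEq V]
    (A : V → V → Prop) (S : Finset V) (w : V) :
    w ∈ closedOut A S ↔ w ∈ S ∨ ∃ u ∈ S, A u w := by
  simp [closedOut]

lemma gammaM_le {V : Type*} [Fintype V] [DecidableEq V]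
    (A : V → V → Prop) (S : Finset V) (h : IsMODS A S) : gammaM A ≤ S.card :=
  Nat.sInf_le ⟨S, h, rfl⟩

/-- `γ⁺ₘ(D) ≤ (n - Δ⁺(D) + 1)/2`. -/
theorem stmt13 {V : Type*} [Fintype V] [DecidableEq V] [Nonempty V]
    (A : V → V → Prop) (hloop : ∀ v, ¬ A v v) :
    (gammaM A : ℝ) ≤ ((Fintype.card V : ℝ) - (DeltaPlus A : ℝ) + 1) / 2 := by
  classical
  set n := Fintype.card V with hn
  set Δ := DeltaPlus A with hΔ
  have hnpos : 1 ≤ n := Fintype.card_pos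
  obtain ⟨v, -, hv⟩ := Finset.exists_mem_eq_sup Finset.univ
    ⟨Classical.arbitrary V, Finset.mem_univ _⟩ (outDeg A)
  set C := closedOut A {v} with hCdef
  have hCcard : C.card = Δ + 1 := by
    have hCeq : C = insert v (Finset.filter (fun w => A v w) Finset.univ) := by
      ext w
      simp only [hCdef, mem_closedOut_iff, Finset.mem_insert, Finset.mem_filter,
        Finset.mem_singleton, Finset.mem_univ, true_and]
      constructor
      · rintro (h | ⟨u, hu, hA⟩)
        · exact Or.inl h
        · exact Or.inr (hu ▸ hA)
      · rintro (h | h)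
        · exact Or.inl h
        · exact Or.inr ⟨v, rfl, h⟩
    have houtv : Δ = outDeg A v := hv
    rw [hCeq, Finset.card_insert_of_notMem (by simp [hloop v]), houtv, outDeg]

  have hCle : C.card ≤ n := by
    simpa [hn] using Finset.card_le_univ C
  have hΔn : Δ + 1 ≤ n := hCcard ▸ hCle
  set k := (n + 1) / 2 - (Δ + 1) with hk
  have hsd : (Finset.univ \ C).card = n - (Δ + 1) := by
    rw [Finset.card_sdiff_of_subset (Finset.subset_univ C), hCcard, Finset.card_univ]
  have hkle : k ≤ (Finset.univ \ C).card := by rw [hsd]; omega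
  obtain ⟨T, hTsub, hTcard⟩ := Finset.exists_subset_card_eq hkle
  set S := insert v T with hS
  have hsubset : C ∪ T ⊆ closedOut A S := by
    intro w hw
    rw [mem_closedOut_iff]
    rcases Finset.mem_union.1 hw with h | h
    · rcases (mem_closedOut_iff A {v} w).1 h with h1 | ⟨u, hu, hA⟩
      · exact Or.inl (by simp [hS, Finset.mem_singleton.1 h1])
      · exact Or.inr ⟨u, by simp [hS, Finset.mem_singleton.1 hu], hA⟩
    · exact Or.inl (by simp [hS, h])
  have hdisj : Disjoint C T := by
    rw [disjoint_comm]
    exact Finset.disjoint_left.2 fun x hx => (Finset.mem_sdiff.1 (hTsub hx)).2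
  have hCT : (C ∪ T).card = Δ + 1 + k := by
    rw [Finset.card_union_of_disjoint hdisj, hCcard, hTcard]
  have hmods : IsMODS A S := by
    have h1 : (C ∪ T).card ≤ (closedOut A S).card := Finset.card_le_card hsubset
    rw [IsMODS]
    rw [hCT] at h1
    omega
  have hScard : S.card ≤ 1 + k := by
    calc S.card ≤ T.card + 1 := Finset.card_insert_le v T
    _ = 1 + k := by rw [hTcard]; omega
  have hg : gammaM A ≤ 1 + k := le_trans (gammaM_le A S hmods) hScard
  have h2 : 2 * gammaM A ≤ n - Δ + 1 := by omega
  have hcast : ((n - Δ : ℕ) : ℝ) = (n : ℝ) - Δ := by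
    push_cast [Nat.cast_sub (by omega : Δ ≤ n)]; ring
  rw [le_div_iff₀ (by norm_num : (0:ℝ) < 2)]
  have := (Nat.cast_le (α := ℝ)).2 h2
  push_cast [hcast] at this
  linarith
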